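/- Let 𝒪 be an order ideal in P = K[x_0,…,x_n], fix a labeling of ∂𝒪 ordered increasingly by degree, and let G be a homogeneous ∂𝒪-prebasis. Then the border reduction relation →⁺_G is confluent: if f ∈ P and h_1, h_2 ∈ ⟨𝒪⟩ satisfy f →⁺_G h_1 and f →⁺_G h_2, then h_1 = h_2. Consequently every f ∈ P reduces via →⁺_G to a unique polynomial with support contained in 𝒪. -/

import Mathlib

open MvPolynomial

namespace Border

/-- A term of `K[x_0, …, x_n]`, identified with its exponent vector. -/
abbrev Term (n : ℕ) := Fin (n + 1) →₀ ℕ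

variable {n : ℕ}

/-- The (standard) degree of a term. -/
def tdeg (m : Term n) : ℕ := ∑ i, m i

/-- An order ideal: a nonempty set of terms closed under divisors. -/
def IsOrderIdeal (O : Set (Term n)) : Prop :=
  O.Nonempty ∧ ∀ τ ∈ O, ∀ τ' : Term n, τ' ≤ τ → τ' ∈ O

/-- The border `∂𝒪 = (x_0·𝒪 ∪ ⋯ ∪ x_n·𝒪) ∖ 𝒪`. -/
def border (O : Set (Term n)) : Set (Term n) :=
  {σ | σ ∉ O ∧ ∃ r : Fin (n + 1), ∃ τ ∈ O, σ = τ + Finsupp.single r 1}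

/-- Multiplicative set of a border term `σ`, with respect to a labeling `lab` of the border:
`𝒯_σ = {η : σ' ∤ η·σ for every border term σ' with a larger label}`. -/
def mulSet (O : Set (Term n)) (lab : Term n → ℕ) (σ : Term n) : Set (Term n) :=
  {η | ∀ σ' ∈ border O, lab σ < lab σ' → ¬ σ' ≤ η + σ}

/-- The cone `C(σ) = {η·σ : η ∈ 𝒯_σ}`. -/
def cone (O : Set (Term n)) (lab : Term n → ℕ) (σ : Term n) : Set (Term n) :=
  (fun η => η + σ) '' mulSet O lab σ

/-- A labeling of the border which is injective and ordered increasingly by degree. -/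
def DegOrderedLabeling (O : Set (Term n)) (lab : Term n → ℕ) : Prop :=
  Set.InjOn lab (border O) ∧
    ∀ σ ∈ border O, ∀ σ' ∈ border O, lab σ < lab σ' → tdeg σ ≤ tdeg σ'

/-- Iterated border closures: `∂⁰𝒪 := 𝒪`, and the `(k+1)`-st closure adds the border. -/
def borderClosure (O : Set (Term n)) : ℕ → Set (Term n)
  | 0 => O
  | k + 1 => borderClosure O k ∪ border (borderClosure O k)

/-- The index `ind_𝒪(τ)`: the least `k` with `τ ∈ ∂^k𝒪`. -/
noncomputable def ind (O : Set (Term n)) (τ : Term n) : ℕ :=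
  sInf {k | τ ∈ borderClosure O k}

/-- Degree-`d` part of a set of terms. -/
def Od (O : Set (Term n)) (d : ℕ) : Set (Term n) := {τ | τ ∈ O ∧ tdeg τ = d}

variable {K : Type*} [Field K]

/-- The index of a nonzero polynomial: the maximal index of a term of its support. -/
noncomputable def indP (O : Set (Term n)) (f : MvPolynomial (Fin (n + 1)) K) : ℕ :=
  f.support.sup (ind O)

/-- A homogeneous `∂𝒪`-prebasis: a family `g σ = σ - Σ_{τ ∈ 𝒪_{deg σ}} c_{στ} τ`. -/
def IsPrebasis (O : Set (Term n)) (g : Term n → MvPolynomial (Fin (n + 1)) K) : Prop :=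
  ∀ σ ∈ border O, ∀ τ ∈ (monomial σ (1 : K) - g σ).support, τ ∈ O ∧ tdeg τ = tdeg σ

/-- The set of border reductors `𝒯G = {η·g_σ : σ ∈ ∂𝒪, η ∈ 𝒯_σ}`. -/
def reductors (O : Set (Term n)) (lab : Term n → ℕ)
    (g : Term n → MvPolynomial (Fin (n + 1)) K) : Set (MvPolynomial (Fin (n + 1)) K) :=
  {p | ∃ σ ∈ border O, ∃ η ∈ mulSet O lab σ, p = monomial η (1 : K) * g σ}

/-- The degree-`d` border reductors `𝒯G_d = 𝒯G ∩ P_d`. -/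
def reductorsDeg (O : Set (Term n)) (lab : Term n → ℕ)
    (g : Term n → MvPolynomial (Fin (n + 1)) K) (d : ℕ) :
    Set (MvPolynomial (Fin (n + 1)) K) :=
  reductors O lab g ∩ {p | p.IsHomogeneous d}

/-- One step of the border reduction relation `→_G`. -/
def Step (O : Set (Term n)) (lab : Term n → ℕ)
    (g : Term n → MvPolynomial (Fin (n + 1)) K)
    (f h : MvPolynomial (Fin (n + 1)) K) : Prop :=
  ∃ σ ∈ border O, ∃ η ∈ mulSet O lab σ, η + σ ∈ f.support ∧
    h = f - f.coeff (η + σ) • (monomial η (1 : K) * g σ)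

/-- The border reduction relation `→⁺_G` (finitely many, possibly zero, steps). -/
def Reduces (O : Set (Term n)) (lab : Term n → ℕ)
    (g : Term n → MvPolynomial (Fin (n + 1)) K) :
    MvPolynomial (Fin (n + 1)) K → MvPolynomial (Fin (n + 1)) K → Prop :=
  Relation.ReflTransGen (Step O lab g)

/-- The `K`-vector space spanned by a set of terms. -/
noncomputable def spanTerms (K : Type*) [Field K] (S : Set (Term n)) :
    Submodule K (MvPolynomial (Fin (n + 1)) K) :=
  Submodule.span K ((fun τ => monomial τ (1 : K)) '' S)

/-- The ideal `(G)` generated by a `∂𝒪`-prebasis. -/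
noncomputable def idealG (O : Set (Term n)) (g : Term n → MvPolynomial (Fin (n + 1)) K) :
    Ideal (MvPolynomial (Fin (n + 1)) K) :=
  Ideal.span (g '' border O)

/-- The degree-`d` part `I_d` of an ideal, as a `K`-vector subspace. -/
noncomputable def degPart (I : Ideal (MvPolynomial (Fin (n + 1)) K)) (d : ℕ) :
    Submodule K (MvPolynomial (Fin (n + 1)) K) :=
  Submodule.restrictScalars K I ⊓ homogeneousSubmodule (Fin (n + 1)) K d

/-- Homogeneous ideal. -/
def IsHomogeneousIdeal (I : Ideal (MvPolynomial (Fin (n + 1)) K)) : Prop :=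
  ∀ f ∈ I, ∀ d : ℕ, homogeneousComponent d f ∈ I

/-- `G` is a homogeneous `∂𝒪`-basis of `J`: it is a prebasis contained in `J` and for every
`d` one has `P_d = J_d ⊕ ⟨𝒪_d⟩`, i.e. the residue classes of `𝒪_d` are a basis of `P_d/J_d`. -/
def IsBorderBasisOf (O : Set (Term n)) (g : Term n → MvPolynomial (Fin (n + 1)) K)
    (J : Ideal (MvPolynomial (Fin (n + 1)) K)) : Prop :=
  IsPrebasis O g ∧ (∀ σ ∈ border O, g σ ∈ J) ∧
    ∀ d : ℕ, degPart J d ⊔ spanTerms K (Od O d) = homogeneousSubmodule (Fin (n + 1)) K d ∧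
      Disjoint (degPart J d) (spanTerms K (Od O d))

/-- An `m`-lower representation of `f` by `𝒯G`: `f = Σ c_j • η_j·g_{σ_j}` with distinct
pairs `(η_j, σ_j)`, `η_j ∈ 𝒯_{σ_j}` and `ind(η_j σ_j) ≤ m`. -/
def HasLRep (O : Set (Term n)) (lab : Term n → ℕ)
    (g : Term n → MvPolynomial (Fin (n + 1)) K)
    (f : MvPolynomial (Fin (n + 1)) K) (m : ℕ) : Prop :=
  ∃ (s : Finset (Term n × Term n)) (c : Term n × Term n → K),
    (∀ p ∈ s, p.2 ∈ border O ∧ p.1 ∈ mulSet O lab p.2 ∧ ind O (p.1 + p.2) ≤ m) ∧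
    f = ∑ p ∈ s, c p • (monomial p.1 (1 : K) * g p.2)

/-- An `m`-lower representation of `f` by `𝒯G_d`. -/
def HasLRepDeg (O : Set (Term n)) (lab : Term n → ℕ)
    (g : Term n → MvPolynomial (Fin (n + 1)) K)
    (f : MvPolynomial (Fin (n + 1)) K) (m d : ℕ) : Prop :=
  ∃ (s : Finset (Term n × Term n)) (c : Term n × Term n → K),
    (∀ p ∈ s, p.2 ∈ border O ∧ p.1 ∈ mulSet O lab p.2 ∧ ind O (p.1 + p.2) ≤ m ∧
      (monomial p.1 (1 : K) * g p.2).IsHomogeneous d) ∧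
    f = ∑ p ∈ s, c p • (monomial p.1 (1 : K) * g p.2)

/-- The subtype of terms of `𝒪` of degree `d`. -/
abbrev OdSub (O : Set (Term n)) (d : ℕ) : Type _ := {τ : Term n // τ ∈ Od O d}

lemma tdeg_component_lt {d : ℕ} (m : Term n) (h : tdeg m = d) (i : Fin (n + 1)) :
    m i < d + 1 := by
  have : m i ≤ tdeg m :=
    Finset.single_le_sum (f := fun j => m j) (fun j _ => Nat.zero_le _) (Finset.mem_univ i)
  omega

instance (O : Set (Term n)) (d : ℕ) : Finite (OdSub O d) := by
  have hinj : Function.Injective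
      (fun τ : OdSub O d => fun i : Fin (n + 1) =>
        (⟨τ.1 i, tdeg_component_lt τ.1 τ.2.2 i⟩ : Fin (d + 1))) := by
    intro a b hab
    apply Subtype.ext
    apply Finsupp.ext
    intro i
    simpa using congrArg Fin.val (congrFun hab i)
  exact Finite.of_injective _ hinj

noncomputable instance (O : Set (Term n)) (d : ℕ) : Fintype (OdSub O d) :=
  Fintype.ofFinite _

open scoped Classical in
/-- The `r`-th `d`-graded formal multiplication matrix of a prebasis `G`,
with rows indexed by `𝒪_{d+1}` and columns by `𝒪_d`. -/
noncomputable def multMatrix (O : Set (Term n))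
    (g : Term n → MvPolynomial (Fin (n + 1)) K) (r : Fin (n + 1)) (d : ℕ) :
    Matrix (OdSub O (d + 1)) (OdSub O d) K :=
  Matrix.of fun τ' τ =>
    if τ.1 + Finsupp.single r 1 ∈ O then
      (if τ.1 + Finsupp.single r 1 = τ'.1 then 1 else 0)
    else (monomial (τ.1 + Finsupp.single r 1) (1 : K)
            - g (τ.1 + Finsupp.single r 1)).coeff τ'.1

/-- The minimum degree of a border term. -/
noncomputable def minDegBorder (O : Set (Term n)) : ℕ := sInf (tdeg '' border O)

/-- The `d`-th Macaulay transformation `a^{⟨d⟩}`, computed greedily. -/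
noncomputable def macaulay : ℕ → ℕ → ℕ
  | 0, _ => 0
  | d + 1, a =>
    if a = 0 then 0
    else
      Nat.choose (sSup {k | Nat.choose k (d + 1) ≤ a} + 1) (d + 2) +
        macaulay d (a - Nat.choose (sSup {k | Nat.choose k (d + 1) ≤ a}) (d + 1))

/-- An ideal is generated in degrees `≤ m` if it is generated by its homogeneous
elements of degree `≤ m`. -/
def GeneratedInDegLE (I : Ideal (MvPolynomial (Fin (n + 1)) K)) (m : ℕ) : Prop :=
  I = Ideal.span {f | f ∈ I ∧ ∃ d ≤ m, f.IsHomogeneous d}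

section ConfluenceProof

lemma tdeg_add (a b : Term n) : tdeg (a + b) = tdeg a + tdeg b := by
  simp [tdeg, Finsupp.add_apply, Finset.sum_add_distrib]

lemma tdeg_single (r : Fin (n + 1)) : tdeg (Finsupp.single r 1 : Term n) = 1 := by
  simp [tdeg, Finsupp.single_apply]

lemma tdeg_eq_zero {a : Term n} (h : tdeg a = 0) : a = 0 := by
  ext i
  have := (Finset.sum_eq_zero_iff).mp h i (Finset.mem_univ i)
  simpa using this

lemma exists_decomp {s : Term n} (hs : s ≠ 0) :
    ∃ (r : Fin (n + 1)) (u : Term n), s = u + Finsupp.single r 1 ∧ tdeg u + 1 = tdeg s := by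
  obtain ⟨r, hr⟩ := Finsupp.ne_iff.mp hs
  simp only [Finsupp.coe_zero, Pi.zero_apply] at hr
  have hle : (Finsupp.single r 1 : Term n) ≤ s := by
    rw [Finsupp.le_iff]
    intro i hi
    have hir : i = r := by
      by_contra hir
      simp [Finsupp.mem_support_iff, Finsupp.single_apply, Ne.symm hir] at hi
      exact hir hi
    subst hir
    simpa [Finsupp.single_apply] using Nat.one_le_iff_ne_zero.mpr hr
  have hca := tsub_add_cancel_of_le hle
  refine ⟨r, s - Finsupp.single r 1, hca.symm, ?_⟩
  calc tdeg (s - Finsupp.single r 1) + 1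
      = tdeg (s - Finsupp.single r 1) + tdeg (Finsupp.single r 1 : Term n) := by
        rw [tdeg_single]
    _ = tdeg (s - Finsupp.single r 1 + Finsupp.single r 1) := (tdeg_add _ _).symm
    _ = tdeg s := by rw [hca]

variable {O : Set (Term n)} {lab : Term n → ℕ}

lemma zero_mem_of_orderIdeal (hO : IsOrderIdeal O) : (0 : Term n) ∈ O := by
  obtain ⟨τ, hτ⟩ := hO.1
  exact hO.2 τ hτ 0 zero_le

lemma borderClosure_mono (O : Set (Term n)) : Monotone (borderClosure O) :=
  monotone_nat_of_le_succ (fun _ => Set.subset_union_left)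

lemma mem_borderClosure_tdeg (hO : IsOrderIdeal O) (t : Term n) :
    t ∈ borderClosure O (tdeg t) := by
  suffices H : ∀ d : ℕ, ∀ t : Term n, tdeg t = d → t ∈ borderClosure O d from H _ t rfl
  intro d
  induction d with
  | zero =>
    intro t hd
    rw [tdeg_eq_zero hd]
    exact zero_mem_of_orderIdeal hO
  | succ k ih =>
    intro t hd
    have ht0 : t ≠ 0 := by
      rintro rfl
      simp [tdeg] at hd
    obtain ⟨r, u, rfl, hu⟩ := exists_decomp ht0
    have hu' := ih u (by omega)
    by_cases hmem : u + Finsupp.single r 1 ∈ borderClosure O k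
    · exact Set.mem_union_left _ hmem
    · exact Set.mem_union_right _ ⟨hmem, r, u, hu', rfl⟩

lemma ind_le_of_mem {t : Term n} {k : ℕ} (h : t ∈ borderClosure O k) : ind O t ≤ k :=
  Nat.sInf_le h

lemma mem_borderClosure_ind (hO : IsOrderIdeal O) (t : Term n) :
    t ∈ borderClosure O (ind O t) := by
  have h := Nat.sInf_mem (s := {k | t ∈ borderClosure O k})
    ⟨tdeg t, mem_borderClosure_tdeg hO t⟩
  exact h

lemma ind_eq_zero_iff (hO : IsOrderIdeal O) {t : Term n} : ind O t = 0 ↔ t ∈ O := by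
  constructor
  · intro h
    have := mem_borderClosure_ind hO t
    rwa [h] at this
  · intro h
    exact Nat.le_zero.mp (ind_le_of_mem (k := 0) h)

lemma ind_add_single_le (hO : IsOrderIdeal O) (t : Term n) (r : Fin (n + 1)) :
    ind O (t + Finsupp.single r 1) ≤ ind O t + 1 := by
  by_cases h : t + Finsupp.single r 1 ∈ borderClosure O (ind O t)
  · exact le_trans (ind_le_of_mem h) (Nat.le_succ _)
  · exact ind_le_of_mem (k := ind O t + 1)
      (Set.mem_union_right _ ⟨h, r, t, mem_borderClosure_ind hO t, rfl⟩)

lemma ind_add_le (hO : IsOrderIdeal O) (t s : Term n) :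
    ind O (t + s) ≤ ind O t + tdeg s := by
  suffices H : ∀ d : ℕ, ∀ s : Term n, tdeg s = d → ind O (t + s) ≤ ind O t + d from
    H _ s rfl
  intro d
  induction d with
  | zero =>
    intro s hd
    rw [tdeg_eq_zero hd]
    simp
  | succ k ih =>
    intro s hd
    have hs0 : s ≠ 0 := by
      rintro rfl
      simp [tdeg] at hd
    obtain ⟨r, u, rfl, hu⟩ := exists_decomp hs0
    calc ind O (t + (u + Finsupp.single r 1)) = ind O ((t + u) + Finsupp.single r 1) := by
          rw [add_assoc]
      _ ≤ ind O (t + u) + 1 := ind_add_single_le hO _ _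
      _ ≤ (ind O t + k) + 1 := by
          have := ih u (by omega)
          omega
      _ = ind O t + (k + 1) := by omega

lemma exists_border_divisor (hO : IsOrderIdeal O) {t : Term n} (ht : t ∉ O) :
    ∃ σ ∈ border O, σ ≤ t := by
  suffices H : ∀ d : ℕ, ∀ t : Term n, tdeg t = d → t ∉ O → ∃ σ ∈ border O, σ ≤ t from
    H _ t rfl ht
  intro d
  induction d with
  | zero =>
    intro t hd ht
    exact absurd (tdeg_eq_zero hd ▸ zero_mem_of_orderIdeal hO) ht
  | succ k ih =>
    intro t hd ht
    have ht0 : t ≠ 0 := fun h => ht (h ▸ zero_mem_of_orderIdeal hO)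
    obtain ⟨r, u, rfl, hu⟩ := exists_decomp ht0
    by_cases hu' : u ∈ O
    · exact ⟨u + Finsupp.single r 1, ⟨ht, r, u, hu', rfl⟩, le_refl _⟩
    · obtain ⟨σ, hσ, hle⟩ := ih u (by omega) hu'
      exact ⟨σ, hσ, le_trans hle le_self_add⟩

lemma exists_cone (hO : IsOrderIdeal O) (lab : Term n → ℕ) {t : Term n} (ht : t ∉ O) :
    ∃ σ ∈ border O, ∃ η ∈ mulSet O lab σ, η + σ = t := by
  classical
  obtain ⟨σ₁, hσ₁, hle₁⟩ := exists_border_divisor hO ht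
  set s : Finset (Term n) := (Finset.Iic t).filter (· ∈ border O) with hs
  have hmem : σ₁ ∈ s := by
    simp only [hs, Finset.mem_filter, Finset.mem_Iic]
    exact ⟨hle₁, hσ₁⟩
  obtain ⟨σ, hσs, hmax⟩ := s.exists_max_image lab ⟨σ₁, hmem⟩
  have hσb : σ ≤ t ∧ σ ∈ border O := by
    simpa only [hs, Finset.mem_filter, Finset.mem_Iic] using hσs
  refine ⟨σ, hσb.2, t - σ, ?_, tsub_add_cancel_of_le hσb.1⟩
  intro σ' hσ' hlt hle
  rw [tsub_add_cancel_of_le hσb.1] at hle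
  have : σ' ∈ s := by
    simp only [hs, Finset.mem_filter, Finset.mem_Iic]
    exact ⟨hle, hσ'⟩
  exact absurd (hmax σ' this) (not_le.mpr hlt)

lemma cone_not_mem (hO : IsOrderIdeal O) {σ η : Term n} (hσ : σ ∈ border O) :
    η + σ ∉ O :=
  fun h => hσ.1 (hO.2 _ h σ le_add_self)

lemma exists_big_divisor (hO : IsOrderIdeal O) :
    ∀ k : ℕ, ∀ t : Term n, t ∈ borderClosure O (k + 1) → t ∉ O →
      ∃ σ ∈ border O, σ ≤ t ∧ tdeg t ≤ tdeg σ + k := by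
  intro k
  induction k with
  | zero =>
    intro t ht htO
    rcases ht with h | h
    · exact absurd h htO
    · exact ⟨t, h, le_refl t, by omega⟩
  | succ k ih =>
    intro t ht htO
    rcases ht with h | h
    · obtain ⟨σ, h1, h2, h3⟩ := ih t h htO
      exact ⟨σ, h1, h2, by omega⟩
    · obtain ⟨hnot, r, u, hu, rfl⟩ := h
      by_cases huO : u ∈ O
      · exact ⟨u + Finsupp.single r 1, ⟨htO, r, u, huO, rfl⟩, le_refl _, by omega⟩
      · obtain ⟨σ, h1, h2, h3⟩ := ih u hu huO
        refine ⟨σ, h1, le_trans h2 le_self_add, ?_⟩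
        rw [tdeg_add, tdeg_single]
        omega

lemma ind_cone (hO : IsOrderIdeal O) (hlab : DegOrderedLabeling O lab)
    {σ η : Term n} (hσ : σ ∈ border O) (hη : η ∈ mulSet O lab σ) :
    ind O (η + σ) = tdeg η + 1 := by
  have hnotO : η + σ ∉ O := cone_not_mem hO hσ
  have hσ1 : ind O σ ≤ 1 := by
    refine ind_le_of_mem (k := 1) ?_
    by_cases h : σ ∈ borderClosure O 0
    · exact Set.mem_union_left _ h
    · exact Set.mem_union_right _ (by
        obtain ⟨hn, r, τ, hτ, he⟩ := hσ
        exact ⟨h, r, τ, hτ, he⟩)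
  have h1 : ind O (η + σ) ≤ tdeg η + 1 := by
    rw [add_comm]
    calc ind O (σ + η) ≤ ind O σ + tdeg η := ind_add_le hO σ η
      _ ≤ tdeg η + 1 := by omega
  refine le_antisymm h1 ?_
  have hk0 : ind O (η + σ) ≠ 0 := fun h => hnotO ((ind_eq_zero_iff hO).mp h)
  obtain ⟨k, hk'⟩ : ∃ k, ind O (η + σ) = k + 1 := ⟨ind O (η + σ) - 1, by omega⟩
  have hmem : η + σ ∈ borderClosure O (k + 1) := hk' ▸ mem_borderClosure_ind hO _
  obtain ⟨σ₀, hσ₀, hle, hdeg⟩ := exists_big_divisor hO k _ hmem hnotO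
  have hlabge : ¬ lab σ < lab σ₀ := fun h => hη σ₀ hσ₀ h hle
  have hdegσ : tdeg σ₀ ≤ tdeg σ := by
    rcases Nat.lt_or_ge (lab σ₀) (lab σ) with h | h
    · exact hlab.2 σ₀ hσ₀ σ hσ h
    · have : lab σ₀ = lab σ := by omega
      rw [hlab.1 hσ₀ hσ this]
  rw [tdeg_add] at hdeg
  omega

lemma cone_inj (hlab : DegOrderedLabeling O lab) {σ σ' η η' : Term n}
    (hσ : σ ∈ border O) (hσ' : σ' ∈ border O) (hη : η ∈ mulSet O lab σ)
    (hη' : η' ∈ mulSet O lab σ') (heq : η + σ = η' + σ') : σ = σ' ∧ η = η' := by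
  have hle1 : σ' ≤ η + σ := by rw [heq]; exact le_add_self
  have hle2 : σ ≤ η' + σ' := by rw [← heq]; exact le_add_self
  have h1 : ¬ lab σ < lab σ' := fun h => hη σ' hσ' h hle1
  have h2 : ¬ lab σ' < lab σ := fun h => hη' σ hσ h hle2
  have hss : σ = σ' := hlab.1 hσ hσ' (by omega)
  subst hss
  exact ⟨rfl, by
    have := heq
    exact add_right_cancel this⟩

variable {K : Type*} [Field K] {g : Term n → MvPolynomial (Fin (n + 1)) K}

lemma reductor_eq {σ : Term n} (η : Term n) :
    monomial η (1 : K) * g σ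
      = monomial (η + σ) 1 - monomial η 1 * (monomial σ 1 - g σ) := by
  rw [mul_sub, monomial_mul, mul_one, sub_sub_cancel]

lemma reductor_coeff_self (hg : IsPrebasis O g) {σ : Term n} (hσ : σ ∈ border O)
    (η : Term n) : (monomial η (1 : K) * g σ).coeff (η + σ) = 1 := by
  classical
  have hq : (monomial σ (1 : K) - g σ).coeff σ = 0 := by
    by_contra h
    exact hσ.1 (hg σ hσ σ (mem_support_iff.mpr h)).1
  rw [reductor_eq, coeff_sub, coeff_monomial, if_pos rfl, coeff_monomial_mul, hq]
  ring

lemma reductor_support (hO : IsOrderIdeal O) (hg : IsPrebasis O g)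
    {σ : Term n} (hσ : σ ∈ border O) (η : Term n) :
    ∀ θ ∈ (monomial η (1 : K) * g σ).support, θ = η + σ ∨ ind O θ ≤ tdeg η := by
  classical
  intro θ hθ
  by_cases heq : θ = η + σ
  · exact Or.inl heq
  right
  rw [reductor_eq] at hθ
  have hθ' := MvPolynomial.support_sub _ _ _ hθ
  rw [Finset.mem_union] at hθ'
  rcases hθ' with h | h
  · rw [support_monomial, if_neg one_ne_zero, Finset.mem_singleton] at h
    exact absurd h heq
  · have hsub := MvPolynomial.support_mul _ _ h
    rw [Finset.mem_add] at hsub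
    obtain ⟨a, ha, b, hb, rfl⟩ := hsub
    rw [support_monomial, if_neg one_ne_zero, Finset.mem_singleton] at ha
    subst ha
    have hbO : b ∈ O := (hg σ hσ b hb).1
    have : ind O b = 0 := (ind_eq_zero_iff hO).mpr hbO
    calc ind O (a + b) = ind O (b + a) := by rw [add_comm]
      _ ≤ ind O b + tdeg a := ind_add_le hO b a
      _ = tdeg a := by omega

lemma span_reductors_eq_zero (hO : IsOrderIdeal O) (hlab : DegOrderedLabeling O lab)
    (hg : IsPrebasis O g) {p : MvPolynomial (Fin (n + 1)) K}
    (hp : p ∈ Submodule.span K (reductors O lab g))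
    (hsupp : ∀ θ ∈ p.support, θ ∈ O) : p = 0 := by
  classical
  obtain ⟨l, hl, rfl⟩ := Submodule.mem_span_set.mp hp
  rcases Finset.eq_empty_or_nonempty l.support with he | hne
  · have : l = 0 := Finsupp.support_eq_empty.mp he
    simp [this]
  exfalso
  have hmem : ∀ v : MvPolynomial (Fin (n + 1)) K, v ∈ l.support →
      ∃ σ, σ ∈ border O ∧ ∃ η, η ∈ mulSet O lab σ ∧ v = monomial η 1 * g σ := by
    intro v hv
    obtain ⟨σ, hσ, η, hη, hv'⟩ := hl hv
    exact ⟨σ, hσ, η, hη, hv'⟩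
  choose! σf hσf ηf hηf hvf using hmem
  obtain ⟨v₀, hv₀, hmax⟩ := l.support.exists_max_image (fun v => tdeg (ηf v)) hne
  set θ := ηf v₀ + σf v₀ with hθdef
  have hθind : ind O θ = tdeg (ηf v₀) + 1 := ind_cone hO hlab (hσf v₀ hv₀) (hηf v₀ hv₀)
  have hcoeff : (l.sum fun mi r => r • mi).coeff θ = l v₀ := by
    rw [Finsupp.sum, coeff_sum, Finset.sum_eq_single v₀]
    · have h1 : v₀.coeff θ = 1 := by
        rw [hvf v₀ hv₀]
        exact reductor_coeff_self hg (hσf v₀ hv₀) (ηf v₀)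
      rw [coeff_smul, h1, smul_eq_mul, mul_one]
    · intro v hv hvne
      have h0 : v.coeff θ = 0 := by
        by_contra h
        have hθv : θ ∈ v.support := mem_support_iff.mpr h
        rw [hvf v hv] at hθv
        rcases reductor_support hO hg (hσf v hv) (ηf v) θ hθv with he | hle
        · have := cone_inj hlab (hσf v hv) (hσf v₀ hv₀) (hηf v hv) (hηf v₀ hv₀) he.symm
          apply hvne
          rw [hvf v hv, hvf v₀ hv₀, this.1, this.2]
        · have := hmax v hv
          omega
      rw [coeff_smul, h0, smul_eq_mul, mul_zero]
    · intro h
      exact absurd hv₀ h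
  have hlv₀ : l v₀ ≠ 0 := Finsupp.mem_support_iff.mp hv₀
  have hθsupp : θ ∈ (l.sum fun mi r => r • mi).support := by
    rw [mem_support_iff, hcoeff]
    exact hlv₀
  have := (ind_eq_zero_iff hO).mpr (hsupp θ hθsupp)
  omega

lemma reduces_sub_mem {f h : MvPolynomial (Fin (n + 1)) K}
    (hr : Reduces O lab g f h) :
    f - h ∈ Submodule.span K (reductors O lab g) := by
  induction hr with
  | refl => simp
  | @tail b c _ hbc ih =>
    obtain ⟨σ, hσ, η, hη, hmem, rfl⟩ := hbc
    have h1 : b.coeff (η + σ) • (monomial η (1 : K) * g σ)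
        ∈ Submodule.span K (reductors O lab g) :=
      Submodule.smul_mem _ _ (Submodule.subset_span ⟨σ, hσ, η, hη, rfl⟩)
    have he : f - (b - b.coeff (η + σ) • (monomial η (1 : K) * g σ))
        = (f - b) + b.coeff (η + σ) • (monomial η (1 : K) * g σ) := by ring
    rw [he]
    exact Submodule.add_mem _ ih h1

lemma spanTerms_support {O : Set (Term n)} {h : MvPolynomial (Fin (n + 1)) K}
    (hh : h ∈ spanTerms K O) : ∀ θ ∈ h.support, θ ∈ O := by
  classical
  refine Submodule.span_induction ?_ ?_ ?_ ?_ hh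
  · rintro x ⟨τ, hτ, rfl⟩ θ hθ
    rw [support_monomial, if_neg one_ne_zero, Finset.mem_singleton] at hθ
    exact hθ ▸ hτ
  · simp
  · intro x y _ _ ihx ihy θ hθ
    rcases Finset.mem_union.mp (MvPolynomial.support_add hθ) with h | h
    exacts [ihx θ h, ihy θ h]
  · intro a x _ ihx θ hθ
    exact ihx θ (MvPolynomial.support_smul hθ)

lemma exists_normal (hO : IsOrderIdeal O) (hlab : DegOrderedLabeling O lab)
    (hg : IsPrebasis O g) (f : MvPolynomial (Fin (n + 1)) K) :
    ∃ h, Reduces O lab g f h ∧ ∀ θ ∈ h.support, θ ∈ O := by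
  classical
  suffices H : ∀ (m k : ℕ) (f : MvPolynomial (Fin (n + 1)) K),
      (∀ θ ∈ f.support, ind O θ ≤ m) →
      ((f.support.filter (fun θ => ind O θ = m)).card ≤ k) →
      ∃ h, Reduces O lab g f h ∧ ∀ θ ∈ h.support, θ ∈ O by
    exact H (f.support.sup (ind O)) _ f (fun θ hθ => Finset.le_sup hθ) le_rfl
  intro m
  induction m with
  | zero =>
    intro k f hm _
    exact ⟨f, Relation.ReflTransGen.refl,
      fun θ hθ => (ind_eq_zero_iff hO).mp (Nat.le_zero.mp (hm θ hθ))⟩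
  | succ m ih =>
    intro k
    induction k with
    | zero =>
      intro f hm hk
      have hall : ∀ θ ∈ f.support, ind O θ ≤ m := by
        intro θ hθ
        have h1 := hm θ hθ
        have h2 : ind O θ ≠ m + 1 := by
          intro he
          have hmem : θ ∈ f.support.filter (fun θ => ind O θ = m + 1) :=
            Finset.mem_filter.mpr ⟨hθ, he⟩
          have := Finset.card_pos.mpr ⟨θ, hmem⟩
          omega
        omega
      exact ih (f.support.filter (fun θ => ind O θ = m)).card f hall le_rfl
    | succ k ihk =>
      intro f hm hk
      by_cases hc : (f.support.filter (fun θ => ind O θ = m + 1)).card ≤ k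
      · exact ihk f hm hc
      · have hcpos : 0 < (f.support.filter (fun θ => ind O θ = m + 1)).card := by omega
        obtain ⟨θ, hθmem⟩ := Finset.card_pos.mp hcpos
        obtain ⟨hθf, hθind⟩ := Finset.mem_filter.mp hθmem
        have hθO : θ ∉ O := fun h => by
          have := (ind_eq_zero_iff hO).mpr h
          omega
        obtain ⟨σ, hσ, η, hη, hηθ⟩ := exists_cone hO lab hθO
        have hind : ind O (η + σ) = tdeg η + 1 := ind_cone hO hlab hσ hη
        have htη : tdeg η = m := by rw [hηθ, hθind] at hind; omega
        set r : MvPolynomial (Fin (n + 1)) K := monomial η 1 * g σ with hrdef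
        set h₀ : MvPolynomial (Fin (n + 1)) K := f - f.coeff θ • r with hh₀
        have hstep : Step O lab g f h₀ := by
          refine ⟨σ, hσ, η, hη, by rw [hηθ]; exact hθf, ?_⟩
          rw [hh₀, hηθ]
        have hr1 : r.coeff θ = 1 := by
          rw [hrdef, ← hηθ]
          exact reductor_coeff_self hg hσ η
        have hθnot : θ ∉ h₀.support := by
          rw [notMem_support_iff, hh₀, coeff_sub, coeff_smul, hr1, smul_eq_mul,
            mul_one, sub_self]
        have hsupp : ∀ θ' ∈ h₀.support, θ' ∈ f.support ∨ ind O θ' ≤ m := by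
          intro θ' hθ'
          rcases Finset.mem_union.mp (MvPolynomial.support_sub _ _ _ hθ') with h | h
          · exact Or.inl h
          · have hrs : θ' ∈ r.support := MvPolynomial.support_smul h
            rcases reductor_support hO hg hσ η θ' (hrdef ▸ hrs) with he | hle
            · exfalso
              apply hθnot
              rw [he, hηθ] at hθ'
              exact hθ'
            · exact Or.inr (by omega)
        have hA : ∀ θ' ∈ h₀.support, ind O θ' ≤ m + 1 := by
          intro θ' hθ'
          rcases hsupp θ' hθ' with h | h
          · exact hm θ' h
          · omega
        have hB : (h₀.support.filter (fun θ' => ind O θ' = m + 1)).card ≤ k := by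
          have hsubset : h₀.support.filter (fun θ' => ind O θ' = m + 1)
              ⊆ (f.support.filter (fun θ' => ind O θ' = m + 1)).erase θ := by
            intro θ' hθ'
            obtain ⟨hθ'h, hθ'ind⟩ := Finset.mem_filter.mp hθ'
            refine Finset.mem_erase.mpr ⟨?_, ?_⟩
            · rintro rfl
              exact hθnot hθ'h
            · rcases hsupp θ' hθ'h with h | h
              · exact Finset.mem_filter.mpr ⟨h, hθ'ind⟩
              · omega
          calc (h₀.support.filter (fun θ' => ind O θ' = m + 1)).card
              ≤ ((f.support.filter (fun θ' => ind O θ' = m + 1)).erase θ).card :=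
                Finset.card_le_card hsubset
            _ = (f.support.filter (fun θ' => ind O θ' = m + 1)).card - 1 :=
                Finset.card_erase_of_mem hθmem
            _ ≤ k := by omega
        obtain ⟨h, hred, hfin⟩ := ihk h₀ hA hB
        exact ⟨h, Relation.ReflTransGen.head hstep hred, hfin⟩

end ConfluenceProof

/-- **Confluence.** For a degree-ordered labeling, border reduction is confluent: the
`(∂𝒪)`-reduced form reached from `f` is unique; consequently each `f` reduces to a unique
polynomial supported in `𝒪`. -/
theorem reduction_confluent (O : Set (Term n)) (hO : IsOrderIdeal O)
    (lab : Term n → ℕ) (hlab : DegOrderedLabeling O lab)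
    (g : Term n → MvPolynomial (Fin (n + 1)) K) (hg : IsPrebasis O g)
    (f : MvPolynomial (Fin (n + 1)) K) :
    (∀ h₁ h₂ : MvPolynomial (Fin (n + 1)) K, h₁ ∈ spanTerms K O → h₂ ∈ spanTerms K O →
      Reduces O lab g f h₁ → Reduces O lab g f h₂ → h₁ = h₂) ∧
    ∃! h : MvPolynomial (Fin (n + 1)) K,
      Reduces O lab g f h ∧ ∀ τ ∈ h.support, τ ∈ O := by
  classical
  have key : ∀ h₁ h₂ : MvPolynomial (Fin (n + 1)) K,
      (∀ θ ∈ h₁.support, θ ∈ O) → (∀ θ ∈ h₂.support, θ ∈ O) →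
      Reduces O lab g f h₁ → Reduces O lab g f h₂ → h₁ = h₂ := by
    intro h₁ h₂ hs₁ hs₂ hr₁ hr₂
    have hm : h₁ - h₂ ∈ Submodule.span K (reductors O lab g) := by
      have he : h₁ - h₂ = (f - h₂) - (f - h₁) := by ring
      rw [he]
      exact Submodule.sub_mem _ (reduces_sub_mem hr₂) (reduces_sub_mem hr₁)
    have hz := span_reductors_eq_zero hO hlab hg hm (fun θ hθ => by
      rcases Finset.mem_union.mp (MvPolynomial.support_sub _ _ _ hθ) with h | h
      exacts [hs₁ θ h, hs₂ θ h])
    exact sub_eq_zero.mp hz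
  constructor
  · intro h₁ h₂ hm₁ hm₂ hr₁ hr₂
    exact key h₁ h₂ (spanTerms_support hm₁) (spanTerms_support hm₂) hr₁ hr₂
  · obtain ⟨h, hr, hs⟩ := exists_normal hO hlab hg f
    exact ⟨h, ⟨hr, hs⟩, fun h' hh' => key h' h hh'.2 hs hh'.1 hr⟩


end Border
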